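/- Suppose each α_t (t ∈ Γ⁺) is injective, and let A_∞ be the direct limit of the direct system (A_s, φ_s^t) over Γ with A_s = A and connecting maps φ_s^t = α_{t−s} for s ≤ t, with canonical maps α^s : A → A_∞. Then for every n, elements y_0, …, y_n ∈ Γ and a_0, …, a_n ∈ A, the inequality ‖Σ_{i=0}^n α^{y_i}(a_i)‖ ≤ ‖Σ_{i=0}^n μ_{y_i}(a_i)‖ holds, and consequently there is a well-defined surjective *-homomorphism σ : B → A_∞ with σ(μ_y(a)) = α^y(a) for all y ∈ Γ, a ∈ A. -/

import Mathlib

open scoped ENNReal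

variable {Γ : Type*} [AddCommGroup Γ] [LinearOrder Γ] [IsOrderedAddMonoid Γ] {A : Type*} [NonUnitalCStarAlgebra A]

/-- The map `μ_x : A → ℓ∞(Γ, A)`, `(μ_x a)(y) = α_{y-x}(a)` for `y ≥ x` and `0` otherwise. -/
noncomputable def mu (α : Γ → (A →⋆ₙₐ[ℂ] A)) (x : Γ) (a : A) :
    lp (fun _ : Γ => A) ∞ :=
  ⟨fun y => if x ≤ y then α (y - x) a else 0,
    memℓp_infty ⟨‖a‖, by
      rintro r ⟨y, rfl⟩
      dsimp only
      split_ifs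
      · exact NonUnitalStarAlgHom.norm_apply_le _ _
      · simp⟩⟩

/-- The C*-subalgebra `B = cl span {μ_x(a) : x ∈ Γ, a ∈ A}` of `ℓ∞(Γ, A)`, as a subset. -/
noncomputable def BSet (α : Γ → (A →⋆ₙₐ[ℂ] A)) : Set (lp (fun _ : Γ => A) ∞) :=
  closure (Submodule.span ℂ {ξ : lp (fun _ : Γ => A) ∞ | ∃ x a, ξ = mu α x a} : Set _)
set_option maxHeartbeats 1000000 in
/-- If each `α_t` is injective and `A∞` is the direct limit of the system `(A, α_{t-s})`
over `Γ` (with isometric canonical maps `ι_s = α^s` having dense union of ranges and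
satisfying the compatibility `ι_t ∘ α_{t-s} = ι_s`), then
`‖∑ ι_{y i}(a i)‖ ≤ ‖∑ μ_{y i}(a i)‖`, and there is a (well-defined) surjective continuous
*-homomorphism `σ : B → A∞` with `σ(μ_y(a)) = ι_y(a)`. -/
theorem direct_limit_norm_ineq_and_sigma_exists
    {Γ : Type*} [AddCommGroup Γ] [LinearOrder Γ] [IsOrderedAddMonoid Γ] {A : Type*} [NonUnitalCStarAlgebra A]
    (α : Γ → (A →⋆ₙₐ[ℂ] A))
    (hα0 : ∀ a : A, α 0 a = a)
    (hαadd : ∀ s t : Γ, 0 ≤ s → 0 ≤ t → ∀ a : A, α (s + t) a = α s (α t a))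
    (hinj : ∀ s : Γ, 0 ≤ s → Function.Injective (α s))
    (Ainf : Type*) [NonUnitalCStarAlgebra Ainf]
    (ι : Γ → (A →⋆ₙₐ[ℂ] Ainf))
    (hcompat : ∀ s t : Γ, s ≤ t → ∀ a : A, ι t (α (t - s) a) = ι s a)
    (hiso : ∀ (s : Γ) (a : A), ‖ι s a‖ = ‖a‖)
    (hdense : DenseRange fun p : Γ × A => ι p.1 p.2) :
    (∀ (n : ℕ) (y : Fin n → Γ) (a : Fin n → A),
      ‖∑ i, ι (y i) (a i)‖ ≤ ‖∑ i, mu α (y i) (a i)‖) ∧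
    ∃ σ : {ξ : lp (fun _ : Γ => A) ∞ // ξ ∈ BSet α} → Ainf,
      Continuous σ ∧ Function.Surjective σ ∧
      (∀ ξ η (hξ : ξ ∈ BSet α) (hη : η ∈ BSet α) (hs : ξ + η ∈ BSet α),
        σ ⟨ξ + η, hs⟩ = σ ⟨ξ, hξ⟩ + σ ⟨η, hη⟩) ∧
      (∀ (c : ℂ) ξ (hξ : ξ ∈ BSet α) (hs : c • ξ ∈ BSet α),
        σ ⟨c • ξ, hs⟩ = c • σ ⟨ξ, hξ⟩) ∧
      (∀ ξ η (hξ : ξ ∈ BSet α) (hη : η ∈ BSet α) (hm : ξ * η ∈ BSet α),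
        σ ⟨ξ * η, hm⟩ = σ ⟨ξ, hξ⟩ * σ ⟨η, hη⟩) ∧
      (∀ ξ (hξ : ξ ∈ BSet α) (hs : star ξ ∈ BSet α),
        σ ⟨star ξ, hs⟩ = star (σ ⟨ξ, hξ⟩)) ∧
      (∀ (y : Γ) (a : A) (h : mu α y a ∈ BSet α), σ ⟨mu α y a, h⟩ = ι y a) := by
  classical
  haveI : Nonempty Γ := ⟨0⟩
  -- coordinates of `mu`
  have hmu_coe : ∀ (x : Γ) (a : A) (s : Γ),
      (mu α x a : ∀ _ : Γ, A) s = if x ≤ s then α (s - x) a else 0 := fun _ _ _ => rfl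
  -- the evaluation maps
  set F : lp (fun _ : Γ => A) ∞ → Γ → Ainf := fun ξ s => ι s (ξ s) with hFdef
  have hFbound : ∀ (ξ η : lp (fun _ : Γ => A) ∞) (s : Γ), ‖F ξ s - F η s‖ ≤ ‖ξ - η‖ := by
    intro ξ η s
    calc ‖F ξ s - F η s‖ = ‖ι s (ξ s - η s)‖ := by rw [map_sub]
      _ = ‖ξ s - η s‖ := hiso _ _
      _ = ‖(ξ - η) s‖ := by rw [lp.coeFn_sub]; rfl
      _ ≤ ‖ξ - η‖ := lp.norm_apply_le_norm (by simp) _ s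
  -- on the span, `F ξ` is eventually constant
  have hspan : ∀ ξ (hξ : ξ ∈ Submodule.span ℂ {ξ : lp (fun _ : Γ => A) ∞ | ∃ x a, ξ = mu α x a}),
      ∃ (t0 : Γ) (Lc : Ainf), ∀ s, t0 ≤ s → F ξ s = Lc := by
    intro ξ hξ
    induction hξ using Submodule.span_induction with
    | mem ξ h =>
      obtain ⟨x, a, rfl⟩ := h
      refine ⟨x, ι x a, fun s hs => ?_⟩
      show ι s ((mu α x a : ∀ _ : Γ, A) s) = ι x a
      rw [hmu_coe, if_pos (show x ≤ s from hs), hcompat x s hs]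
    | zero =>
      exact ⟨0, 0, fun s _ => by show ι s ((0 : lp (fun _ : Γ => A) ∞) s) = 0; rw [lp.coeFn_zero]; simp⟩
    | add ξ η hξ hη ihξ ihη =>
      obtain ⟨t1, L1, h1⟩ := ihξ
      obtain ⟨t2, L2, h2⟩ := ihη
      refine ⟨max t1 t2, L1 + L2, fun s hs => ?_⟩
      show ι s ((ξ + η) s) = L1 + L2
      rw [lp.coeFn_add, Pi.add_apply, map_add]
      rw [← h1 s ((le_max_left _ _).trans hs), ← h2 s ((le_max_right _ _).trans hs)]
    | smul c ξ hξ ih =>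
      obtain ⟨t1, L1, h1⟩ := ih
      refine ⟨t1, c • L1, fun s hs => ?_⟩
      show ι s ((c • ξ) s) = c • L1
      rw [lp.coeFn_smul, Pi.smul_apply, map_smul, ← h1 s hs]
  -- on `B`, `F ξ` converges along `atTop`
  have hconv : ∀ ξ, ξ ∈ BSet α → ∃ Lv : Ainf, Filter.Tendsto (F ξ) Filter.atTop (nhds Lv) := by
    intro ξ hξ
    have hc : Cauchy (Filter.map (F ξ) Filter.atTop) := by
      refine Metric.cauchy_iff.mpr ⟨Filter.map_neBot, fun ε hε => ?_⟩
      obtain ⟨η, hηmem, hηd⟩ := Metric.mem_closure_iff.mp hξ (ε/3) (by linarith)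
      obtain ⟨t0, Lc, hLc⟩ := hspan η hηmem
      refine ⟨F ξ '' Set.Ici t0, Filter.image_mem_map (Filter.Ici_mem_atTop t0), ?_⟩
      rintro _ ⟨s, hs, rfl⟩ _ ⟨s', hs', rfl⟩
      have hd : ∀ r, t0 ≤ r → dist (F ξ r) Lc < ε/3 := by
        intro r hr
        rw [← hLc r hr, dist_eq_norm]
        calc ‖F ξ r - F η r‖ ≤ ‖ξ - η‖ := hFbound ξ η r
          _ = dist ξ η := (dist_eq_norm _ _).symm
          _ < ε/3 := hηd
      calc dist (F ξ s) (F ξ s') ≤ dist (F ξ s) Lc + dist Lc (F ξ s') := dist_triangle _ _ _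
        _ < ε/3 + ε/3 := by
            have := hd s hs
            have h2 := hd s' hs'
            rw [dist_comm] at h2
            exact add_lt_add this h2
        _ ≤ ε := by linarith
    obtain ⟨Lv, hLv⟩ := CompleteSpace.complete hc
    exact ⟨Lv, hLv⟩
  choose L hL using hconv
  -- basic properties of L
  have hlip : ∀ ξ₁ (h₁ : ξ₁ ∈ BSet α) ξ₂ (h₂ : ξ₂ ∈ BSet α),
      ‖L ξ₁ h₁ - L ξ₂ h₂‖ ≤ ‖ξ₁ - ξ₂‖ := by
    intro ξ₁ h₁ ξ₂ h₂
    refine le_of_tendsto (((hL ξ₁ h₁).sub (hL ξ₂ h₂)).norm) (Filter.Eventually.of_forall fun s => ?_)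
    exact hFbound ξ₁ ξ₂ s
  have hgen : ∀ (x : Γ) (a : A) (h : mu α x a ∈ BSet α), L (mu α x a) h = ι x a := by
    intro x a h
    refine tendsto_nhds_unique (hL _ h) ?_
    refine Filter.Tendsto.congr' ?_ (tendsto_const_nhds (x := ι x a))
    filter_upwards [Filter.Ici_mem_atTop x] with s hs
    show ι x a = F (mu α x a) s
    rw [hFdef]
    show ι x a = ι s ((mu α x a : ∀ _ : Γ, A) s)
    rw [hmu_coe, if_pos (show x ≤ s from hs), hcompat x s hs]
  have hadd : ∀ ξ η (hξ : ξ ∈ BSet α) (hη : η ∈ BSet α) (hs : ξ + η ∈ BSet α),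
      L (ξ + η) hs = L ξ hξ + L η hη := by
    intro ξ η hξ hη hs
    refine tendsto_nhds_unique (hL _ hs) ?_
    have : F (ξ + η) = fun s => F ξ s + F η s := by
      funext s
      show ι s ((ξ + η) s) = _
      rw [lp.coeFn_add, Pi.add_apply, map_add]
    rw [this]
    exact (hL ξ hξ).add (hL η hη)
  have hsmul : ∀ (c : ℂ) ξ (hξ : ξ ∈ BSet α) (hs : c • ξ ∈ BSet α),
      L (c • ξ) hs = c • L ξ hξ := by
    intro c ξ hξ hs
    refine tendsto_nhds_unique (hL _ hs) ?_
    have : F (c • ξ) = fun s => c • F ξ s := by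
      funext s
      show ι s ((c • ξ) s) = _
      rw [lp.coeFn_smul, Pi.smul_apply, map_smul]
    rw [this]
    exact (hL ξ hξ).const_smul c
  have hmul : ∀ ξ η (hξ : ξ ∈ BSet α) (hη : η ∈ BSet α) (hm : ξ * η ∈ BSet α),
      L (ξ * η) hm = L ξ hξ * L η hη := by
    intro ξ η hξ hη hm
    refine tendsto_nhds_unique (hL _ hm) ?_
    have : F (ξ * η) = fun s => F ξ s * F η s := by
      funext s
      show ι s ((ξ * η) s) = _
      rw [lp.infty_coeFn_mul, Pi.mul_apply, map_mul]
    rw [this]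
    exact (hL ξ hξ).mul (hL η hη)
  have hstar : ∀ ξ (hξ : ξ ∈ BSet α) (hs : star ξ ∈ BSet α),
      L (star ξ) hs = star (L ξ hξ) := by
    intro ξ hξ hs
    refine tendsto_nhds_unique (hL _ hs) ?_
    have : F (star ξ) = fun s => star (F ξ s) := by
      funext s
      show ι s ((star ξ) s) = _
      rw [lp.coeFn_star, Pi.star_apply, map_star]
    rw [this]
    exact (hL ξ hξ).star
  have hLcongr : ∀ (ξ₁ ξ₂ : lp (fun _ : Γ => A) ∞) (e : ξ₁ = ξ₂) h₁ h₂, L ξ₁ h₁ = L ξ₂ h₂ := by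
    rintro ξ₁ ξ₂ rfl h₁ h₂; rfl
  refine ⟨?_, fun q => L q.1 q.2, ?_, ?_, hadd, hsmul, hmul, hstar, hgen⟩
  -- the norm inequality
  · intro n y a
    obtain ⟨T, hT⟩ := (Finset.image y Finset.univ).exists_le
    have hT' : ∀ i, y i ≤ T := fun i => hT _ (Finset.mem_image_of_mem y (Finset.mem_univ i))
    set ξ := ∑ i, mu α (y i) (a i) with hξdef
    have hcoord : ι T (ξ T) = ∑ i, ι (y i) (a i) := by
      have h1 : (ξ : ∀ _ : Γ, A) T = ∑ i, (mu α (y i) (a i) : ∀ _ : Γ, A) T := by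
        rw [hξdef, lp.coeFn_sum, Finset.sum_apply]
      rw [h1, map_sum]
      refine Finset.sum_congr rfl fun i _ => ?_
      rw [hmu_coe, if_pos (hT' i), hcompat _ _ (hT' i)]
    calc ‖∑ i, ι (y i) (a i)‖ = ‖ι T (ξ T)‖ := by rw [hcoord]
      _ = ‖ξ T‖ := hiso _ _
      _ ≤ ‖ξ‖ := lp.norm_apply_le_norm (by simp) ξ T
  -- continuity
  · refine (LipschitzWith.of_dist_le_mul (K := 1) ?_).continuous
    intro p q
    rw [NNReal.coe_one, one_mul, Subtype.dist_eq, dist_eq_norm, dist_eq_norm]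
    exact hlip _ _ _ _
  -- surjectivity
  · intro b
    have happrox : ∀ n : ℕ, ∃ pr : Γ × A, dist b (ι pr.1 pr.2) < (1/2 : ℝ)^n := by
      intro n
      exact Metric.denseRange_iff.mp hdense b ((1/2)^n) (by positivity)
    choose p hp using happrox
    set y : ℕ → Γ := fun n => (p n).1 with hydef
    set aa : ℕ → A := fun n => (p n).2 with haadef
    set u : ℕ → Ainf := fun n => ι (y n) (aa n) with hudef
    have hub : ∀ n, dist b (u n) < (1/2 : ℝ)^n := hp
    set t : ℕ → Γ := fun n => Nat.rec (y 0) (fun k tk => max tk (y (k+1))) n with htdef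
    have ht_succ : ∀ n, t (n+1) = max (t n) (y (n+1)) := fun n => rfl
    have ht_mono : Monotone t := monotone_nat_of_le_succ fun n => by
      rw [ht_succ]; exact le_max_left _ _
    have hyt : ∀ n, y n ≤ t n := by
      intro n
      cases n with
      | zero => exact le_rfl
      | succ k => rw [ht_succ]; exact le_max_right _ _
    set c : ℕ → A := fun n =>
      Nat.casesOn n (aa 0) (fun k => α (t (k+1) - y (k+1)) (aa (k+1)) - α (t (k+1) - y k) (aa k))
      with hcdef
    have hι0 : ι (t 0) (c 0) = u 0 := rfl
    have hιs : ∀ k, ι (t (k+1)) (c (k+1)) = u (k+1) - u k := by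
      intro k
      show ι (t (k+1)) (α (t (k+1) - y (k+1)) (aa (k+1)) - α (t (k+1) - y k) (aa k)) = _
      rw [map_sub, hcompat _ _ (hyt (k+1)), hcompat _ _ ((hyt k).trans (ht_mono (Nat.le_succ k)))]
    set g : ℕ → lp (fun _ : Γ => A) ∞ := fun k => mu α (t k) (c k) with hgdef
    have hgmem : ∀ k, g k ∈ (Submodule.span ℂ {ξ : lp (fun _ : Γ => A) ∞ | ∃ x a, ξ = mu α x a}) :=
      fun k => Submodule.subset_span ⟨t k, c k, rfl⟩
    have hSmem : ∀ N, (∑ k ∈ Finset.range (N+1), g k) ∈ BSet α := by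
      intro N
      exact subset_closure (Submodule.sum_mem _ fun k _ => hgmem k)
    -- norm bounds and summability
    have hgnorm : ∀ k, ‖g k‖ ≤ ‖c k‖ := by
      intro k
      refine lp.norm_le_of_forall_le (norm_nonneg _) fun i => ?_
      rw [hmu_coe]
      split_ifs
      · exact NonUnitalStarAlgHom.norm_apply_le _ _
      · simp
    have hcnorm : ∀ k, ‖c (k+1)‖ ≤ 2 * (1/2 : ℝ)^k := by
      intro k
      have h1 : ‖c (k+1)‖ = ‖u (k+1) - u k‖ := by rw [← hiso (t (k+1)) (c (k+1)), hιs]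
      have h2 : ‖u (k+1) - u k‖ ≤ dist (u (k+1)) b + dist b (u k) := by
        rw [← dist_eq_norm]; exact dist_triangle _ _ _
      have h3 : dist (u (k+1)) b < (1/2 : ℝ)^(k+1) := by rw [dist_comm]; exact hub (k+1)
      have h4 : (1/2 : ℝ)^(k+1) ≤ (1/2)^k :=
        pow_le_pow_of_le_one (by norm_num) (by norm_num) (Nat.le_succ k)
      have h5 := hub k
      rw [h1]
      linarith [h2, h3, h4, h5]
    have hsummable : Summable fun k => ‖g k‖ := by
      rw [← summable_nat_add_iff 1]
      refine Summable.of_nonneg_of_le (fun k => norm_nonneg _)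
        (fun k => (hgnorm (k+1)).trans (hcnorm k)) ?_
      exact (summable_geometric_of_lt_one (by norm_num) (by norm_num)).mul_left 2
    obtain ⟨ξ, hξs⟩ := hsummable.of_norm
    have hS' : Filter.Tendsto (fun N => ∑ k ∈ Finset.range (N+1), g k)
        Filter.atTop (nhds ξ) :=
      hξs.tendsto_sum_nat.comp (Filter.tendsto_add_atTop_nat 1)
    have hmemξ : ξ ∈ BSet α := by
      have hclosed : IsClosed (BSet α) := isClosed_closure
      exact hclosed.mem_of_tendsto hS' (Filter.Eventually.of_forall hSmem)
    -- values on partial sums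
    have hval : ∀ N (h : (∑ k ∈ Finset.range (N+1), g k) ∈ BSet α),
        L (∑ k ∈ Finset.range (N+1), g k) h = u N := by
      intro N
      induction N with
      | zero =>
        intro h
        rw [hLcongr _ (g 0) (by simp) h (subset_closure (hgmem 0))]
        exact (hgen (t 0) (c 0) _).trans hι0
      | succ N ih =>
        intro h
        have e : (∑ k ∈ Finset.range (N+1+1), g k)
            = (∑ k ∈ Finset.range (N+1), g k) + g (N+1) := Finset.sum_range_succ g (N+1)
        rw [hLcongr _ _ e h (by rw [← e]; exact h),
          hadd _ _ (hSmem N) (subset_closure (hgmem (N+1))) _, ih (hSmem N)]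
        exact (congrArg (u N + ·) ((hgen (t (N+1)) (c (N+1)) _).trans (hιs N))).trans
          (add_sub_cancel _ _)
    -- conclude
    have h2 : Filter.Tendsto u Filter.atTop (nhds (L ξ hmemξ)) := by
      rw [tendsto_iff_norm_sub_tendsto_zero]
      have h1 : Filter.Tendsto (fun N => ‖(∑ k ∈ Finset.range (N+1), g k) - ξ‖)
          Filter.atTop (nhds 0) := tendsto_iff_norm_sub_tendsto_zero.mp hS'
      refine squeeze_zero (fun N => norm_nonneg _) (fun N => ?_) h1
      rw [← hval N (hSmem N)]
      exact hlip _ _ _ _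
    have h3 : Filter.Tendsto u Filter.atTop (nhds b) := by
      rw [tendsto_iff_dist_tendsto_zero]
      refine squeeze_zero (fun N => dist_nonneg) (fun N => ?_)
        (tendsto_pow_atTop_nhds_zero_of_lt_one (r := (1/2 : ℝ)) (by norm_num) (by norm_num))
      rw [dist_comm]
      exact (hub N).le
    exact ⟨⟨ξ, hmemξ⟩, tendsto_nhds_unique h2 h3⟩
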